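/- arXiv:2204.10009 — 6 statements merged into one kernel-verified Lean document; each statement's English description precedes it below -/
import Mathlib

section
/- For any real numbers a > 0, d ≥ 0 and any integer N ≥ 2, one has (d + a·∑_{k=⌈N/2⌉}^{N} 1/k) / (∑_{k=⌈N/2⌉}^{N} 1/√(k+1)) ≤ 4(d + a·ln 3) / √(N+2). -/
lemma log3_gt : (13:ℝ)/12 < Real.log 3 := by
  have h := Real.log_le_sub_one_of_pos (x := Real.exp 1 / 3) (by positivity)
  rw [Real.log_div (Real.exp_ne_zero 1) (by norm_num), Real.log_exp] at h
  have he := Real.exp_one_lt_d9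
  norm_num at he ⊢
  linarith

lemma harm (N : ℕ) : ∀ m : ℕ, 2 ≤ m → m ≤ N + 1 →
    ∑ k ∈ Finset.Icc m N, (1:ℝ)/k ≤ Real.log N - Real.log ((m:ℝ) - 1) := by
  induction N with
  | zero => intro m hm hm'; omega
  | succ N ih =>
    intro m hm hm'
    rcases eq_or_lt_of_le hm' with h | h
    · subst h
      rw [Finset.Icc_eq_empty (by omega)]
      push_cast
      simp
    · have hmN : m ≤ N + 1 := by omega
      rw [Finset.sum_Icc_succ_top hmN]
      have h1 := ih m hm hmN
      have hN1 : (1:ℕ) ≤ N := by omega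
      have hNpos : (0:ℝ) < N := by exact_mod_cast hN1
      have h2 : (1:ℝ)/((N:ℝ)+1) ≤ Real.log ((N:ℝ)+1) - Real.log N := by
        have := Real.log_le_sub_one_of_pos (x := (N:ℝ)/((N:ℝ)+1)) (by positivity)
        rw [Real.log_div (by positivity) (by positivity)] at this
        have key : (N:ℝ)/((N:ℝ)+1) - 1 = -(1/((N:ℝ)+1)) := by
          field_simp
          ring
        linarith
      push_cast
      push_cast at h1 h2
      linarith

lemma num_bound (N : ℕ) (hN : 3 ≤ N) :
    ∑ k ∈ Finset.Icc ((N+1)/2) N, (1:ℝ)/k ≤ Real.log 3 := by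
  rcases eq_or_ne N 4 with rfl | h4
  · have : Finset.Icc ((4+1)/2) 4 = ({2,3,4} : Finset ℕ) := by decide
    rw [this]
    have := log3_gt
    norm_num [Finset.sum_insert, Finset.mem_insert]
    linarith
  · set m := (N+1)/2 with hm
    have hm2 : 2 ≤ m := by omega
    have hle : (N:ℕ) ≤ 3*(m-1) := by omega
    have h := harm N m hm2 (by omega)
    have hm1 : (1:ℝ) ≤ (m:ℝ) - 1 := by
      have : (2:ℝ) ≤ (m:ℝ) := by exact_mod_cast hm2
      linarith
    have hlog : Real.log N ≤ Real.log 3 + Real.log ((m:ℝ)-1) := by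
      rw [← Real.log_mul (by norm_num) (by linarith)]
      apply Real.log_le_log (by positivity)
      have : ((3*(m-1):ℕ):ℝ) = 3*((m:ℝ)-1) := by
        push_cast [Nat.cast_sub (by omega : 1 ≤ m)]; ring
      calc (N:ℝ) ≤ ((3*(m-1):ℕ):ℝ) := by exact_mod_cast hle
        _ = 3*((m:ℝ)-1) := this
    linarith

lemma den_bound (N : ℕ) (hN : 2 ≤ N) :
    Real.sqrt ((N:ℝ) + 2) ≤ 4 * ∑ k ∈ Finset.Icc ((N+1)/2) N, (1:ℝ)/Real.sqrt ((k:ℝ)+1) := by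
  set m := (N+1)/2 with hm
  have hcard : (Finset.Icc m N).card = N + 1 - m := Nat.card_Icc m N
  have hstep : (Finset.Icc m N).card • ((1:ℝ)/Real.sqrt ((N:ℝ)+1)) ≤
      ∑ k ∈ Finset.Icc m N, (1:ℝ)/Real.sqrt ((k:ℝ)+1) := by
    apply Finset.card_nsmul_le_sum
    intro x hx
    rw [Finset.mem_Icc] at hx
    apply div_le_div_of_nonneg_left (by norm_num) (by positivity)
    apply Real.sqrt_le_sqrt
    have : (x:ℝ) ≤ (N:ℝ) := by exact_mod_cast hx.2
    linarith
  have hc : ((N:ℝ)+1)/2 ≤ ((N + 1 - m : ℕ):ℝ) := by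
    have h1 : N + 1 ≤ 2 * (N + 1 - m) := by omega
    have : ((N+1:ℕ):ℝ) ≤ ((2*(N+1-m):ℕ):ℝ) := by exact_mod_cast h1
    push_cast at this ⊢
    linarith
  have hs : Real.sqrt ((N:ℝ)+1) / 2 ≤ ∑ k ∈ Finset.Icc m N, (1:ℝ)/Real.sqrt ((k:ℝ)+1) := by
    rw [hcard] at hstep
    have hsq : (0:ℝ) < Real.sqrt ((N:ℝ)+1) := Real.sqrt_pos.mpr (by positivity)
    have : Real.sqrt ((N:ℝ)+1) / 2 ≤ ((N+1-m:ℕ):ℝ) * ((1:ℝ)/Real.sqrt ((N:ℝ)+1)) := by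
      rw [mul_one_div, le_div_iff₀ hsq]
      have hsq2 := Real.sq_sqrt (by positivity : (0:ℝ) ≤ (N:ℝ)+1)
      nlinarith [hsq, hc]
    calc Real.sqrt ((N:ℝ)+1)/2 ≤ ((N+1-m:ℕ):ℝ) * ((1:ℝ)/Real.sqrt ((N:ℝ)+1)) := this
      _ ≤ _ := by rw [← nsmul_eq_mul]; exact hstep
  have h2 : Real.sqrt ((N:ℝ)+2) ≤ 2 * Real.sqrt ((N:ℝ)+1) := by
    rw [show (2:ℝ) * Real.sqrt ((N:ℝ)+1) = Real.sqrt 4 * Real.sqrt ((N:ℝ)+1) by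
      rw [show (4:ℝ) = 2^2 by norm_num, Real.sqrt_sq (by norm_num)],
      ← Real.sqrt_mul (by norm_num)]
    apply Real.sqrt_le_sqrt; linarith
  linarith

theorem stmt_1 (a d : ℝ) (ha : 0 < a) (hd : 0 ≤ d) (N : ℕ) (hN : 2 ≤ N) :
    (d + a * ∑ k ∈ Finset.Icc ((N + 1) / 2) N, (1 : ℝ) / k) /
      (∑ k ∈ Finset.Icc ((N + 1) / 2) N, (1 : ℝ) / Real.sqrt (k + 1)) ≤
    4 * (d + a * Real.log 3) / Real.sqrt (N + 2) := by
  have hlog : (13:ℝ)/12 < Real.log 3 := log3_gt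
  rcases eq_or_lt_of_le hN with rfl | h3
  · -- N = 2
    have hI : Finset.Icc ((2+1)/2) 2 = ({1, 2} : Finset ℕ) := by decide
    rw [hI]
    have hs4 : Real.sqrt ((2:ℕ) + 2) = 2 := by
      rw [show ((2:ℕ):ℝ) + 2 = 2^2 by norm_num, Real.sqrt_sq (by norm_num)]
    rw [hs4]
    have e1 : ∑ k ∈ ({1,2} : Finset ℕ), (1:ℝ)/k = 3/2 := by norm_num
    have h2le : Real.sqrt 2 ≤ 2 := by
      nlinarith [Real.sq_sqrt (by norm_num : (0:ℝ) ≤ 2), Real.sqrt_nonneg 2]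
    have h3le : Real.sqrt 3 ≤ 2 := by
      nlinarith [Real.sq_sqrt (by norm_num : (0:ℝ) ≤ 3), Real.sqrt_nonneg 3]
    have h2pos : (0:ℝ) < Real.sqrt 2 := Real.sqrt_pos.mpr (by norm_num)
    have h3pos : (0:ℝ) < Real.sqrt 3 := Real.sqrt_pos.mpr (by norm_num)
    have e2 : ∑ k ∈ ({1,2} : Finset ℕ), (1:ℝ)/Real.sqrt (k+1)
        = 1/Real.sqrt 2 + 1/Real.sqrt 3 := by norm_num
    rw [e1, e2]
    have hS2ge : (1:ℝ) ≤ 1/Real.sqrt 2 + 1/Real.sqrt 3 := by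
      have a1 : (1:ℝ)/2 ≤ 1/Real.sqrt 2 := by
        apply div_le_div_of_nonneg_left (by norm_num) h2pos h2le
      have a2 : (1:ℝ)/2 ≤ 1/Real.sqrt 3 := by
        apply div_le_div_of_nonneg_left (by norm_num) h3pos h3le
      linarith
    calc (d + a * (3/2)) / (1/Real.sqrt 2 + 1/Real.sqrt 3)
        ≤ d + a * (3/2) := div_le_self (by nlinarith) hS2ge
      _ ≤ 2 * (d + a * Real.log 3) := by nlinarith
      _ = 4 * (d + a * Real.log 3) / 2 := by ring
  · -- N ≥ 3
    have hN3 : 3 ≤ N := h3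
    have hnum := num_bound N hN3
    have hden := den_bound N hN
    have hS2pos : 0 < ∑ k ∈ Finset.Icc ((N+1)/2) N, (1:ℝ)/Real.sqrt ((k:ℝ)+1) := by
      apply Finset.sum_pos
      · intro i _; positivity
      · exact Finset.nonempty_Icc.mpr (by omega)
    have hsqpos : 0 < Real.sqrt ((N:ℝ)+2) := Real.sqrt_pos.mpr (by positivity)
    rw [div_le_div_iff₀ hS2pos hsqpos]
    have hl0 : (0:ℝ) ≤ Real.log 3 := by linarith
    have key1 : d + a * ∑ k ∈ Finset.Icc ((N+1)/2) N, (1:ℝ)/k ≤ d + a * Real.log 3 := by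
      nlinarith
    have key2 : (d + a * Real.log 3) * Real.sqrt ((N:ℝ)+2)
        ≤ (d + a * Real.log 3) * (4 * ∑ k ∈ Finset.Icc ((N+1)/2) N, (1:ℝ)/Real.sqrt ((k:ℝ)+1)) :=
      mul_le_mul_of_nonneg_left hden (by nlinarith)
    calc (d + a * ∑ k ∈ Finset.Icc ((N+1)/2) N, (1:ℝ)/k) * Real.sqrt ((N:ℝ)+2)
        ≤ (d + a * Real.log 3) * Real.sqrt ((N:ℝ)+2) :=
          mul_le_mul_of_nonneg_right key1 hsqpos.le
      _ ≤ _ := by linarith [key2]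
end

section
/- Let (v_k) be a sequence in ℝⁿ that is quasi-Fejér convergent to a nonempty set S ⊆ ℝⁿ. Then (v_k) is bounded. -/
theorem stmt_5 (n : ℕ) (v : ℕ → EuclideanSpace ℝ (Fin n))
    (S : Set (EuclideanSpace ℝ (Fin n))) (hS : S.Nonempty)
    (h : ∀ x ∈ S, ∃ (k₀ : ℕ) (ε : ℕ → ℝ), (∀ k, 0 ≤ ε k) ∧ Summable ε ∧
        ∀ k ≥ k₀, ‖v (k + 1) - x‖ ^ 2 ≤ ‖v k - x‖ ^ 2 + ε k) :
    Bornology.IsBounded (Set.range v) := by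
  obtain ⟨x, hx⟩ := hS
  obtain ⟨k₀, ε, hε0, hεs, hrec⟩ := h x hx
  have htsum0 : 0 ≤ ∑' i, ε i := tsum_nonneg hε0
  set B : ℝ := ‖v k₀ - x‖ ^ 2 + ∑' i, ε i with hB
  have key : ∀ m, ‖v (k₀ + m) - x‖ ^ 2 ≤
      ‖v k₀ - x‖ ^ 2 + ∑ i ∈ Finset.range m, ε (k₀ + i) := by
    intro m
    induction m with
    | zero => simp
    | succ m ih =>
      have h1 := hrec (k₀ + m) (Nat.le_add_right _ _)
      rw [Finset.sum_range_succ, show k₀ + (m + 1) = k₀ + m + 1 by omega]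
      linarith
  have hsum : ∀ m, ∑ i ∈ Finset.range m, ε (k₀ + i) ≤ ∑' i, ε i := by
    intro m
    have : ∑ i ∈ Finset.range m, ε (k₀ + i)
        = ∑ i ∈ (Finset.range m).map ⟨fun a => k₀ + a, add_right_injective k₀⟩, ε i := by
      simp [Finset.sum_map]
    rw [this]
    exact Summable.sum_le_tsum _ (fun i _ => hε0 i) hεs
  have hbd : ∀ k ≥ k₀, ‖v k - x‖ ^ 2 ≤ B := by
    intro k hk
    obtain ⟨m, rfl⟩ := Nat.exists_eq_add_of_le hk
    exact (key m).trans (by have := hsum m; linarith)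
  rw [isBounded_iff_forall_norm_le]
  refine ⟨((Finset.range (k₀ + 1)).sup' ⟨0, Finset.mem_range.mpr (Nat.succ_pos _)⟩ fun k => ‖v k‖) ⊔ (Real.sqrt B + ‖x‖), ?_⟩
  rintro y ⟨k, rfl⟩
  rcases lt_or_ge k k₀ with hk | hk
  · exact le_sup_of_le_left (Finset.le_sup' (fun k => ‖v k‖) (Finset.mem_range.mpr (show k < k₀ + 1 by omega)))
  · refine le_sup_of_le_right ?_
    have h1 : ‖v k - x‖ ≤ Real.sqrt B := by
      have := hbd k hk
      nlinarith [Real.sq_sqrt (show (0:ℝ) ≤ B by positivity), norm_nonneg (v k - x),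
        Real.sqrt_nonneg B]
    calc ‖v k‖ = ‖(v k - x) + x‖ := by rw [sub_add_cancel]
      _ ≤ ‖v k - x‖ + ‖x‖ := norm_add_le _ _
      _ ≤ Real.sqrt B + ‖x‖ := by linarith
end

section
/- Let (v_k) be a sequence in ℝⁿ that is quasi-Fejér convergent to a nonempty set S ⊆ ℝⁿ. If some cluster point v̄ of (v_k) belongs to S, then the whole sequence (v_k) converges to v̄. -/
open Filter

theorem stmt_6 (n : ℕ) (v : ℕ → EuclideanSpace ℝ (Fin n))
    (S : Set (EuclideanSpace ℝ (Fin n))) (hS : S.Nonempty)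
    (h : ∀ x ∈ S, ∃ (k₀ : ℕ) (ε : ℕ → ℝ), (∀ k, 0 ≤ ε k) ∧ Summable ε ∧
        ∀ k ≥ k₀, ‖v (k + 1) - x‖ ^ 2 ≤ ‖v k - x‖ ^ 2 + ε k)
    (vbar : EuclideanSpace ℝ (Fin n))
    (hcluster : ∃ φ : ℕ → ℕ, StrictMono φ ∧ Tendsto (v ∘ φ) atTop (nhds vbar))
    (hvbar : vbar ∈ S) :
    Tendsto v atTop (nhds vbar) := by
  obtain ⟨φ, hφ, hφv⟩ := hcluster
  obtain ⟨k₀, ε, hε0, hεs, hfe⟩ := h vbar hvbar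
  set d : ℕ → ℝ := fun k => ‖v k - vbar‖ ^ 2 with hd
  set T : ℕ → ℝ := fun k => ∑' j, ε (j + k) with hT
  have hT0 : Tendsto T atTop (nhds 0) := by
    simpa [hT] using tendsto_sum_nat_add ε
  have hTrec : ∀ k, T k = ε k + T (k + 1) := by
    intro k
    have hsum : Summable (fun j => ε (j + k)) := (summable_nat_add_iff k).2 hεs
    have h1 := Summable.tsum_eq_zero_add hsum
    have h2 : (fun j => ε (j + 1 + k)) = fun j => ε (j + (k + 1)) := by
      funext j; congr 1; omega
    simp only [zero_add] at h1
    rw [hT]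
    simp only []
    rw [h1, h2]
  set b : ℕ → ℝ := fun k => d k + T k with hb
  have hTnn : ∀ k, 0 ≤ T k := fun k => tsum_nonneg (fun j => hε0 _)
  have hbmono : ∀ k, k₀ ≤ k → b (k + 1) ≤ b k := by
    intro k hk
    have h1 := hfe k hk
    have h2 := hTrec k
    simp only [hb, hd]
    nlinarith [h1, h2]
  have hanti : Antitone (fun m => b (m + k₀)) := by
    apply antitone_nat_of_succ_le
    intro m
    have := hbmono (m + k₀) (Nat.le_add_left _ _)
    simpa [Nat.succ_add] using this
  have hbdd : BddBelow (Set.range fun m => b (m + k₀)) := by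
    refine ⟨0, ?_⟩
    rintro x ⟨m, rfl⟩
    have h1 : (0:ℝ) ≤ d (m + k₀) := sq_nonneg _
    have h2 := hTnn (m + k₀)
    simp only [hb]
    linarith
  have hBlim : Tendsto (fun m => b (m + k₀)) atTop (nhds (⨅ m, b (m + k₀))) :=
    tendsto_atTop_ciInf hanti hbdd
  set L := ⨅ m, b (m + k₀) with hL
  have hbL : Tendsto b atTop (nhds L) := (tendsto_add_atTop_iff_nat k₀).1 hBlim
  have hdL : Tendsto d atTop (nhds L) := by
    have := hbL.sub hT0
    simpa [hb] using this
  have hsub0 : Tendsto (fun k => d (φ k)) atTop (nhds 0) := by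
    have h1 : Tendsto (fun k => (v ∘ φ) k - vbar) atTop (nhds 0) := by
      simpa using hφv.sub (tendsto_const_nhds (x := vbar))
    have h2 : Tendsto (fun k => ‖(v ∘ φ) k - vbar‖) atTop (nhds 0) := by
      simpa using h1.norm
    simpa [hd, Function.comp] using h2.pow 2
  have hsubL : Tendsto (fun k => d (φ k)) atTop (nhds L) :=
    hdL.comp hφ.tendsto_atTop
  have hL0 : L = 0 := tendsto_nhds_unique hsubL hsub0
  have hnorm : Tendsto (fun k => ‖v k - vbar‖) atTop (nhds 0) := by
    have hs : Tendsto (fun k => Real.sqrt (d k)) atTop (nhds (Real.sqrt 0)) :=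
      (Real.continuous_sqrt.tendsto 0).comp (hL0 ▸ hdL)
    simpa [hd, Real.sqrt_sq (norm_nonneg _)] using hs
  rw [tendsto_iff_norm_sub_tendsto_zero]
  exact hnorm
end

section
/- Suppose a sequence (x_k) ⊂ ℝⁿ with f(x_k) ≥ f* satisfies, with γ_k = 1/√k, Γ·(1/√(k+1))·(f(x_k) − f*) ≤ ‖x_k − x*‖² − ‖x_{k+1} − x*‖² + (βc/ρ)(1/k) for all k ≥ 1, where Γ > 0, β ∈ (0,1), c > 0, ρ > 1/2. Then for every N ≥ 1: min{f(x_k) − f* : k = 1,…,N} ≤ (4/Γ)·(‖x_1 − x*‖² + βc/ρ + (βc/ρ)·ln N)/√N; in particular the minimum tends to 0 as N → ∞. -/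
open Filter

lemma harm_le (N : ℕ) (hN : 1 ≤ N) :
    ∑ k ∈ Finset.Icc 1 N, (1 / (k : ℝ)) ≤ 1 + Real.log N := by
  induction N, hN using Nat.le_induction with
  | base => simp
  | succ N hN ih =>
    rw [Finset.sum_Icc_succ_top (by omega)]
    have hlog : Real.log N + 1 / ((N:ℝ) + 1) ≤ Real.log (N + 1) := by
      have hN0 : (0:ℝ) < N := by exact_mod_cast hN
      have h1 : (0:ℝ) < (N:ℝ) / (N + 1) := by positivity
      have := Real.log_le_sub_one_of_pos h1
      rw [Real.log_div (ne_of_gt hN0) (by positivity)] at this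
      have he : (N:ℝ) / (N + 1) - 1 = -(1 / ((N:ℝ)+1)) := by field_simp; ring
      rw [he] at this
      linarith
    push_cast
    linarith

lemma sq_sum_ge (N : ℕ) (hN : 1 ≤ N) :
    Real.sqrt N / 2 ≤ ∑ k ∈ Finset.Icc 1 N, (1 / Real.sqrt ((k : ℝ) + 1)) := by
  have hterm : ∀ k ∈ Finset.Icc 1 N, 1 / (2 * Real.sqrt N) ≤ 1 / Real.sqrt ((k:ℝ)+1) := by
    intro k hk
    rw [Finset.mem_Icc] at hk
    have hk1 : (k:ℝ) + 1 ≤ 4 * N := by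
      have : (k:ℝ) ≤ N := by exact_mod_cast hk.2
      have : (1:ℝ) ≤ N := by exact_mod_cast hN
      linarith
    have h1 : Real.sqrt ((k:ℝ)+1) ≤ 2 * Real.sqrt N := by
      have := Real.sqrt_le_sqrt hk1
      rwa [show (4:ℝ) * N = 2^2 * N by ring, Real.sqrt_mul (by positivity),
        Real.sqrt_sq (by norm_num)] at this
    have h2 : (0:ℝ) < Real.sqrt ((k:ℝ)+1) := Real.sqrt_pos.mpr (by positivity)
    exact one_div_le_one_div_of_le h2 h1
  calc Real.sqrt N / 2 = N * (1 / (2 * Real.sqrt N)) := by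
        have hN0 : (0:ℝ) < N := by exact_mod_cast hN
        have := Real.mul_self_sqrt hN0.le
        have hs : (0:ℝ) < Real.sqrt N := Real.sqrt_pos.mpr hN0
        field_simp
        nlinarith
    _ = ∑ _k ∈ Finset.Icc 1 N, (1 / (2 * Real.sqrt N)) := by
        rw [Finset.sum_const, Nat.card_Icc]; simp
    _ ≤ _ := Finset.sum_le_sum hterm

theorem stmt_13 (n : ℕ) (f : EuclideanSpace ℝ (Fin n) → ℝ) (fstar : ℝ)
    (x : ℕ → EuclideanSpace ℝ (Fin n)) (xstar : EuclideanSpace ℝ (Fin n))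
    (Γ β c ρ : ℝ) (hΓ : 0 < Γ) (hβ : β ∈ Set.Ioo (0 : ℝ) 1) (hc : 0 < c)
    (hρ : 1 / 2 < ρ)
    (hrec : ∀ k : ℕ, 1 ≤ k → Γ * (1 / Real.sqrt (k + 1)) * (f (x k) - fstar) ≤
        ‖x k - xstar‖ ^ 2 - ‖x (k + 1) - xstar‖ ^ 2 + (β * c / ρ) * (1 / k))
    (hge : ∀ k ≥ 1, fstar ≤ f (x k)) :
    (∀ N : ℕ, ∀ hN : 1 ≤ N,
      (Finset.Icc 1 N).inf' (Finset.nonempty_Icc.mpr hN) (fun k => f (x k) - fstar) ≤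
        (4 / Γ) * (‖x 1 - xstar‖ ^ 2 + β * c / ρ + (β * c / ρ) * Real.log N) /
          Real.sqrt N) ∧
    Tendsto (fun N : ℕ =>
        (Finset.Icc 1 (N + 1)).inf' (Finset.nonempty_Icc.mpr (by omega))
          (fun k => f (x k) - fstar)) atTop (nhds 0) := by
  set a : ℝ := β * c / ρ with ha_def
  have ha : 0 < a := by
    apply div_pos (mul_pos hβ.1 hc); linarith
  set d : ℝ := ‖x 1 - xstar‖ ^ 2 with hd_def
  have hd : 0 ≤ d := by positivity
  -- telescoped sum bound
  have hsum : ∀ N : ℕ, 1 ≤ N →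
      ∑ k ∈ Finset.Icc 1 N, Γ * (1 / Real.sqrt ((k:ℝ) + 1)) * (f (x k) - fstar) ≤
      d - ‖x (N+1) - xstar‖ ^ 2 + a * ∑ k ∈ Finset.Icc 1 N, (1 / (k:ℝ)) := by
    intro N hN
    induction N, hN using Nat.le_induction with
    | base =>
      have := hrec 1 le_rfl
      simp only [Finset.Icc_self, Finset.sum_singleton]
      push_cast at this ⊢
      linarith
    | succ N hN ih =>
      have hr := hrec (N+1) (by omega)
      push_cast at hr
      rw [Finset.sum_Icc_succ_top (by omega), Finset.sum_Icc_succ_top (by omega)]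
      push_cast
      have : a * (∑ k ∈ Finset.Icc 1 N, (1 / (k:ℝ)) + 1 / ((N:ℝ)+1)) =
          a * ∑ k ∈ Finset.Icc 1 N, (1 / (k:ℝ)) + a * (1 / ((N:ℝ)+1)) := by ring
      rw [this]
      linarith
  -- main per-N bound
  have main : ∀ N : ℕ, ∀ hN : 1 ≤ N,
      (Finset.Icc 1 N).inf' (Finset.nonempty_Icc.mpr hN) (fun k => f (x k) - fstar) ≤
        (4 / Γ) * (d + a + a * Real.log N) / Real.sqrt N := by
    intro N hN
    set m := (Finset.Icc 1 N).inf' (Finset.nonempty_Icc.mpr hN) (fun k => f (x k) - fstar)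
      with hm_def
    have hm0 : 0 ≤ m := by
      apply Finset.le_inf'
      intro k hk
      rw [Finset.mem_Icc] at hk
      have := hge k hk.1
      linarith
    have hS := sq_sum_ge N hN
    have hH := harm_le N hN
    have hNr : (0:ℝ) < Real.sqrt N := Real.sqrt_pos.mpr (by exact_mod_cast hN)
    -- m * Γ * S ≤ sum
    have h1 : m * (Γ * ∑ k ∈ Finset.Icc 1 N, (1 / Real.sqrt ((k:ℝ) + 1))) ≤
        ∑ k ∈ Finset.Icc 1 N, Γ * (1 / Real.sqrt ((k:ℝ) + 1)) * (f (x k) - fstar) := by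
      rw [Finset.mul_sum, Finset.mul_sum]
      apply Finset.sum_le_sum
      intro k hk
      have hmk : m ≤ f (x k) - fstar := Finset.inf'_le _ hk
      have hpos : 0 ≤ Γ * (1 / Real.sqrt ((k:ℝ) + 1)) := by positivity
      calc m * (Γ * (1 / Real.sqrt ((k:ℝ)+1))) = Γ * (1 / Real.sqrt ((k:ℝ)+1)) * m := by ring
        _ ≤ Γ * (1 / Real.sqrt ((k:ℝ)+1)) * (f (x k) - fstar) :=
            mul_le_mul_of_nonneg_left hmk hpos
    have h2 : m * (Γ * (Real.sqrt N / 2)) ≤ m * (Γ * ∑ k ∈ Finset.Icc 1 N,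
        (1 / Real.sqrt ((k:ℝ) + 1))) := by
      apply mul_le_mul_of_nonneg_left _ hm0
      exact mul_le_mul_of_nonneg_left hS hΓ.le
    have h3 : m * (Γ * (Real.sqrt N / 2)) ≤ d + a * (1 + Real.log N) := by
      have hx2 : (0:ℝ) ≤ ‖x (N+1) - xstar‖ ^ 2 := by positivity
      have hsumN := hsum N hN
      have haH : a * ∑ k ∈ Finset.Icc 1 N, (1 / (k:ℝ)) ≤ a * (1 + Real.log N) :=
        mul_le_mul_of_nonneg_left hH ha.le
      linarith
    rw [div_mul_eq_mul_div, div_div, le_div_iff₀ (by positivity)]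
    nlinarith [mul_nonneg hm0 hNr.le]
  constructor
  · intro N hN
    have := main N hN
    convert this using 2
  · -- tendsto
    have hlogdiv : Tendsto (fun y : ℝ => Real.log y / Real.sqrt y) atTop (nhds 0) := by
      have := (isLittleO_log_rpow_atTop one_half_pos).tendsto_div_nhds_zero
      apply this.congr'
      filter_upwards [eventually_ge_atTop (0:ℝ)] with y hy
      rw [Real.sqrt_eq_rpow]
    have hinvsqrt : Tendsto (fun y : ℝ => 1 / Real.sqrt y) atTop (nhds 0) := by
      have h := (Real.continuous_sqrt.tendsto 0).comp tendsto_inv_atTop_zero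
      simp only [Function.comp, Real.sqrt_zero] at h
      apply h.congr
      intro y
      simp [Function.comp, Real.sqrt_inv, one_div]
    have hA : Tendsto (fun N : ℕ => ((N:ℝ) + 1)) atTop atTop :=
      tendsto_atTop_add_const_right _ 1 tendsto_natCast_atTop_atTop
    have hB : Tendsto (fun N : ℕ =>
        (4 / Γ) * (d + a + a * Real.log ((N:ℝ)+1)) / Real.sqrt ((N:ℝ)+1)) atTop (nhds 0) := by
      have e1 : Tendsto (fun N : ℕ => (4 / Γ) * (d + a) * (1 / Real.sqrt ((N:ℝ)+1)))
          atTop (nhds 0) := by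
        have := (hinvsqrt.comp hA).const_mul ((4 / Γ) * (d + a))
        simpa using this
      have e2 : Tendsto (fun N : ℕ =>
          (4 / Γ) * a * (Real.log ((N:ℝ)+1) / Real.sqrt ((N:ℝ)+1))) atTop (nhds 0) := by
        have := (hlogdiv.comp hA).const_mul ((4 / Γ) * a)
        simpa using this
      have := e1.add e2
      rw [add_zero] at this
      apply this.congr
      intro N
      have hs : Real.sqrt ((N:ℝ)+1) ≠ 0 := by positivity
      field_simp
    apply tendsto_of_tendsto_of_tendsto_of_le_of_le tendsto_const_nhds hB
    · intro N
      show (0:ℝ) ≤ _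
      apply Finset.le_inf'
      intro k hk
      rw [Finset.mem_Icc] at hk
      have := hge k hk.1
      linarith
    · intro N
      have := main (N+1) (by omega)
      push_cast at this
      convert this using 2
end

section
/- Suppose all points x_k lie in a set C with ‖x − y‖² ≤ D for all x, y ∈ C, x* ∈ C, f(x_k) ≥ f* for all k, and with γ_k = 1/√k one has Γ·(1/√(k+1))·(f(x_k) − f*) ≤ ‖x_k − x*‖² − ‖x_{k+1} − x*‖² + (βc/ρ)(1/k) for all k ≥ 1 (Γ > 0, β ∈ (0,1), c > 0, ρ > 1/2). Then for every N ≥ 2: min{f(x_k) − f* : k = 1,…,N} ≤ 4(D + (βc/ρ)ln 3)/(Γ√(N+2)). -/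
private lemma tele (u : ℕ → ℝ) (M N : ℕ) (h : M ≤ N) :
    ∑ k ∈ Finset.Icc M N, (u k - u (k + 1)) = u M - u (N + 1) := by
  induction N with
  | zero =>
    interval_cases M
    simp
  | succ n ih =>
    rcases eq_or_lt_of_le h with rfl | h'
    · simp
    · rw [Finset.sum_Icc_succ_top (by omega), ih (by omega)]
      ring

private lemma logge (y : ℝ) (hy : 0 < y) : 1 - 1 / y ≤ Real.log y := by
  have h := Real.log_le_sub_one_of_pos (show (0:ℝ) < 1 / y by positivity)
  rw [one_div, Real.log_inv] at h
  rw [one_div]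
  linarith

private lemma harm_s14 (M N : ℕ) (hM1 : 1 ≤ M) (hMN : M ≤ N) (h2M : N + 1 ≤ 2 * M)
    (hN : 2 ≤ N) :
    ∑ k ∈ Finset.Icc M N, (1 : ℝ) / k ≤ Real.log 3 := by
  have hMpos : (0:ℝ) < M := by exact_mod_cast hM1
  have hNpos : (0:ℝ) < (N:ℝ) + 1 := by positivity
  have T1 : ∑ k ∈ Finset.Icc M N, (Real.log (k + 1) - Real.log k)
      = Real.log (N + 1) - Real.log M := by
    have h := tele (fun k => -Real.log k) M N hMN
    calc ∑ k ∈ Finset.Icc M N, (Real.log (k + 1) - Real.log k)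
        = ∑ k ∈ Finset.Icc M N, ((fun k : ℕ => -Real.log k) k - (fun k : ℕ => -Real.log k) (k + 1)) := by
          refine Finset.sum_congr rfl fun k _ => ?_
          push_cast
          ring
      _ = -Real.log M - -Real.log (N + 1) := by rw [h]; push_cast; ring
      _ = Real.log (N + 1) - Real.log M := by ring
  have T2 : ∑ k ∈ Finset.Icc M N, ((1 : ℝ) / k - 1 / (k + 1))
      = 1 / M - 1 / (N + 1) := by
    have h := tele (fun k => 1 / (k : ℝ)) M N hMN
    calc ∑ k ∈ Finset.Icc M N, ((1 : ℝ) / k - 1 / (k + 1))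
        = ∑ k ∈ Finset.Icc M N, ((fun k : ℕ => 1 / (k:ℝ)) k - (fun k : ℕ => 1 / (k:ℝ)) (k + 1)) := by
          refine Finset.sum_congr rfl fun k _ => ?_
          push_cast
          ring
      _ = 1 / (M:ℝ) - 1 / ((N:ℝ) + 1) := by rw [h]; push_cast; ring
  have step : ∑ k ∈ Finset.Icc M N, (1 : ℝ) / k ≤
      ∑ k ∈ Finset.Icc M N, ((Real.log (k + 1) - Real.log k) + ((1:ℝ)/k - 1/(k+1))) := by
    refine Finset.sum_le_sum fun k hk => ?_
    have hk1 : 1 ≤ k := le_trans hM1 (Finset.mem_Icc.mp hk).1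
    have hkpos : (0:ℝ) < k := by exact_mod_cast hk1
    have hlg := logge (((k:ℝ) + 1) / k) (by positivity)
    rw [Real.log_div (by positivity) (by positivity), one_div_div] at hlg
    have e : (1:ℝ) - (k:ℝ) / ((k:ℝ) + 1) = 1 / ((k:ℝ) + 1) := by field_simp; ring
    rw [e] at hlg
    linarith
  rw [Finset.sum_add_distrib, T1, T2] at step
  have hMge : ((N:ℝ) + 1) / 2 ≤ (M:ℝ) := by
    have : (N:ℝ) + 1 ≤ 2 * M := by exact_mod_cast h2M
    linarith
  have hlogM : Real.log (N + 1) - Real.log 2 ≤ Real.log M := by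
    have := Real.log_le_log (by positivity) hMge
    rw [Real.log_div (by positivity) (by norm_num)] at this
    linarith
  have hinvM : 1 / (M:ℝ) ≤ 2 * (1 / ((N:ℝ) + 1)) := by
    rw [div_le_iff₀ hMpos] at *
    rw [mul_one_div, div_mul_eq_mul_div, le_div_iff₀ hNpos]
    linarith
  have hinvN : (1:ℝ) / ((N:ℝ) + 1) ≤ 1 / 3 := by
    have h3 : (3:ℝ) ≤ (N:ℝ) + 1 := by
      have : (2:ℝ) ≤ (N:ℝ) := by exact_mod_cast hN
      linarith
    rw [div_le_div_iff₀ hNpos (by norm_num)]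
    linarith
  have h32 : (1:ℝ)/3 ≤ Real.log 3 - Real.log 2 := by
    have := logge (3/2) (by norm_num)
    rw [Real.log_div (by norm_num) (by norm_num)] at this
    norm_num at this ⊢
    linarith
  linarith

theorem stmt_14 (n : ℕ) (f : EuclideanSpace ℝ (Fin n) → ℝ) (fstar : ℝ)
    (C : Set (EuclideanSpace ℝ (Fin n))) (D : ℝ)
    (hD : ∀ x ∈ C, ∀ y ∈ C, ‖x - y‖ ^ 2 ≤ D)
    (x : ℕ → EuclideanSpace ℝ (Fin n)) (hxC : ∀ k, x k ∈ C)
    (xstar : EuclideanSpace ℝ (Fin n)) (hxstar : xstar ∈ C)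
    (Γ β c ρ : ℝ) (hΓ : 0 < Γ) (hβ : β ∈ Set.Ioo (0 : ℝ) 1) (hc : 0 < c)
    (hρ : 1 / 2 < ρ)
    (hge : ∀ k ≥ 1, fstar ≤ f (x k))
    (hrec : ∀ k : ℕ, 1 ≤ k → Γ * (1 / Real.sqrt (k + 1)) * (f (x k) - fstar) ≤
        ‖x k - xstar‖ ^ 2 - ‖x (k + 1) - xstar‖ ^ 2 + (β * c / ρ) * (1 / k)) :
    ∀ N : ℕ, ∀ hN : 2 ≤ N,
      (Finset.Icc 1 N).inf' (Finset.nonempty_Icc.mpr (by omega))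
          (fun k => f (x k) - fstar) ≤
        4 * (D + (β * c / ρ) * Real.log 3) / (Γ * Real.sqrt (N + 2)) := by
  intro N hN
  set a : ℝ := β * c / ρ with ha_def
  have hρ0 : (0:ℝ) < ρ := by linarith
  have ha : 0 < a := by
    apply div_pos (mul_pos hβ.1 hc) hρ0
  have hD0 : 0 ≤ D := le_trans (by positivity) (hD xstar hxstar xstar hxstar)
  have hlog3 : 0 < Real.log 3 := Real.log_pos (by norm_num)
  set m : ℝ := (Finset.Icc 1 N).inf' (Finset.nonempty_Icc.mpr (by omega))
      (fun k => f (x k) - fstar) with hm_def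
  set M : ℕ := N / 2 + 1 with hM_def
  have hM1 : 1 ≤ M := by omega
  have hMN : M ≤ N := by omega
  have h2M : N + 1 ≤ 2 * M := by omega
  have hsq : (0:ℝ) < Real.sqrt ((N:ℝ) + 2) := Real.sqrt_pos.mpr (by positivity)
  set S : ℝ := ∑ k ∈ Finset.Icc M N, 1 / Real.sqrt ((k:ℝ) + 1) with hS_def
  -- lower bound on S
  have hS : Real.sqrt ((N:ℝ) + 2) / 4 ≤ S := by
    have hterm : ∀ k ∈ Finset.Icc M N,
        1 / Real.sqrt ((N:ℝ) + 2) ≤ 1 / Real.sqrt ((k:ℝ) + 1) := by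
      intro k hk
      have hkN := (Finset.mem_Icc.mp hk).2
      have hk2 : (0:ℝ) < Real.sqrt ((k:ℝ) + 1) := Real.sqrt_pos.mpr (by positivity)
      apply one_div_le_one_div_of_le hk2
      apply Real.sqrt_le_sqrt
      have : (k:ℝ) ≤ N := by exact_mod_cast hkN
      linarith
    have hsum := Finset.sum_le_sum hterm
    rw [Finset.sum_const, Nat.card_Icc, nsmul_eq_mul] at hsum
    have hcard : ((N:ℝ) + 2) / 4 ≤ ((N + 1 - M : ℕ) : ℝ) := by
      have h4 : N + 2 ≤ 4 * (N + 1 - M) := by omega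
      have := (Nat.cast_le (α := ℝ)).mpr h4
      push_cast at this ⊢
      linarith
    calc Real.sqrt ((N:ℝ) + 2) / 4
        ≤ ((N + 1 - M : ℕ) : ℝ) * (1 / Real.sqrt ((N:ℝ) + 2)) := by
          rw [mul_one_div, div_le_div_iff₀ (by norm_num) hsq]
          have hss : Real.sqrt ((N:ℝ) + 2) * Real.sqrt ((N:ℝ) + 2) = (N:ℝ) + 2 :=
            Real.mul_self_sqrt (by positivity)
          rw [hss]
          linarith
      _ ≤ S := hsum
  -- main summed inequality
  have key : Γ * m * S ≤ D + a * Real.log 3 := by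
    have h1 : ∑ k ∈ Finset.Icc M N, Γ * (1 / Real.sqrt ((k:ℝ) + 1)) * m ≤
        ∑ k ∈ Finset.Icc M N,
          ((‖x k - xstar‖ ^ 2 - ‖x (k + 1) - xstar‖ ^ 2) + a * (1 / (k:ℝ))) := by
      refine Finset.sum_le_sum fun k hk => ?_
      obtain ⟨hkM, hkN⟩ := Finset.mem_Icc.mp hk
      have hk1 : 1 ≤ k := le_trans hM1 hkM
      have hmk : m ≤ f (x k) - fstar :=
        Finset.inf'_le _ (Finset.mem_Icc.mpr ⟨hk1, hkN⟩)
      have hpos : 0 ≤ Γ * (1 / Real.sqrt ((k:ℝ) + 1)) := by positivity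
      calc Γ * (1 / Real.sqrt ((k:ℝ) + 1)) * m
          ≤ Γ * (1 / Real.sqrt ((k:ℝ) + 1)) * (f (x k) - fstar) :=
            mul_le_mul_of_nonneg_left hmk hpos
        _ ≤ (‖x k - xstar‖ ^ 2 - ‖x (k + 1) - xstar‖ ^ 2) + a * (1 / (k:ℝ)) := by
            have := hrec k hk1
            push_cast at this ⊢
            linarith
    have hL : ∑ k ∈ Finset.Icc M N, Γ * (1 / Real.sqrt ((k:ℝ) + 1)) * m = Γ * m * S := by
      rw [hS_def, Finset.mul_sum]
      exact Finset.sum_congr rfl fun k _ => by ring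
    have hR : ∑ k ∈ Finset.Icc M N,
        ((‖x k - xstar‖ ^ 2 - ‖x (k + 1) - xstar‖ ^ 2) + a * (1 / (k:ℝ)))
        = (‖x M - xstar‖ ^ 2 - ‖x (N + 1) - xstar‖ ^ 2) +
          a * ∑ k ∈ Finset.Icc M N, (1 : ℝ) / k := by
      rw [Finset.sum_add_distrib, tele (fun k => ‖x k - xstar‖ ^ 2) M N hMN,
        Finset.mul_sum]
    rw [hL, hR] at h1
    have hDb : ‖x M - xstar‖ ^ 2 ≤ D := hD (x M) (hxC M) xstar hxstar
    have hnn : 0 ≤ ‖x (N + 1) - xstar‖ ^ 2 := by positivity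
    have hharm := harm_s14 M N hM1 hMN h2M hN
    nlinarith [mul_le_mul_of_nonneg_left hharm (le_of_lt ha)]
  -- conclude
  rcases le_or_gt m 0 with hm0 | hm0
  · have : 0 ≤ 4 * (D + a * Real.log 3) / (Γ * Real.sqrt ((N:ℝ) + 2)) := by
      apply div_nonneg
      · nlinarith
      · positivity
    linarith
  · rw [le_div_iff₀ (by positivity)]
    have h4 : Γ * m * (Real.sqrt ((N:ℝ) + 2) / 4) ≤ Γ * m * S :=
      mul_le_mul_of_nonneg_left hS (by positivity)
    nlinarith [key, h4]
end

section
/- Let σ > 0, β ∈ (0,1), Θ > 0, Γ > 0, c > 0, ρ > 1/2, and set γ_k = 2/(σβΘk). Suppose (x_k) ⊂ ℝⁿ with f(x_k) ≥ f(x*) satisfies Γγ_{k+1}(f(x_k) − f(x*)) ≤ (1 − σβΘγ_{k+1})‖x_k − x*‖² − ‖x_{k+1} − x*‖² + (βc/ρ)γ_k² for all k ≥ 1. Then for every N ≥ 1: min{f(x_k) − f(x*) : k = 1,…,N} ≤ (8βc)/(ρσβΘΓ) · 1/(N+1). -/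
set_option maxHeartbeats 1000000


theorem stmt_15 (n : ℕ) (f : EuclideanSpace ℝ (Fin n) → ℝ)
    (x : ℕ → EuclideanSpace ℝ (Fin n)) (xstar : EuclideanSpace ℝ (Fin n))
    (σ β Θ Γ c ρ : ℝ) (hσ : 0 < σ) (hβ : β ∈ Set.Ioo (0 : ℝ) 1) (hΘ : 0 < Θ)
    (hΓ : 0 < Γ) (hc : 0 < c) (hρ : 1 / 2 < ρ)
    (hge : ∀ k ≥ 1, f xstar ≤ f (x k))
    (hrec : ∀ k : ℕ, 1 ≤ k →
        Γ * (2 / (σ * β * Θ * (k + 1))) * (f (x k) - f xstar) ≤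
          (1 - σ * β * Θ * (2 / (σ * β * Θ * (k + 1)))) * ‖x k - xstar‖ ^ 2 -
            ‖x (k + 1) - xstar‖ ^ 2 + (β * c / ρ) * (2 / (σ * β * Θ * k)) ^ 2) :
    ∀ N : ℕ, ∀ hN : 1 ≤ N,
      (Finset.Icc 1 N).inf' (Finset.nonempty_Icc.mpr hN)
          (fun k => f (x k) - f xstar) ≤
        (8 * β * c) / (ρ * σ * β * Θ * Γ) * (1 / (N + 1)) := by
  intro N hN
  obtain ⟨hβ0, hβ1⟩ := hβ
  have hρ0 : (0:ℝ) < ρ := lt_trans (by norm_num) hρ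
  set A := σ * β * Θ with hAdef
  have hA : 0 < A := by positivity
  have hAne : A ≠ 0 := ne_of_gt hA
  have hρne : ρ ≠ 0 := ne_of_gt hρ0
  set C := 4 * β * c / (ρ * A ^ 2) with hCdef
  have hC : 0 < C := by positivity
  set m := (Finset.Icc 1 N).inf' (Finset.nonempty_Icc.mpr hN)
      (fun k => f (x k) - f xstar) with hmdef
  set b : ℕ → ℝ := fun j => (j : ℝ) * ((j : ℝ) - 1) / 2 * ‖x j - xstar‖ ^ 2 with hbdef
  have hm0 : 0 ≤ m := by
    rw [hmdef]
    apply Finset.le_inf'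
    intro k hk
    have hk1 : 1 ≤ k := (Finset.mem_Icc.mp hk).1
    have := hge k hk1
    linarith
  have key : ∀ i, i < N →
      Γ * ((i:ℝ) + 1) / A * m ≤ b (i+1) - b (i+1+1) + C := by
    intro i hi
    have hr := hrec (i+1) (by omega)
    push_cast at hr
    have hi1 : ((i:ℝ) + 1) ≠ 0 := by positivity
    have hi2 : ((i:ℝ) + 1 + 1) ≠ 0 := by positivity
    have hmul := mul_le_mul_of_nonneg_left hr
      (show (0:ℝ) ≤ ((i:ℝ)+1) * ((i:ℝ)+1+1) / 2 by positivity)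
    have e1 : ((i:ℝ)+1) * ((i:ℝ)+1+1) / 2 *
        (Γ * (2 / (A * ((i:ℝ)+1+1))) * (f (x (i+1)) - f xstar)) =
        Γ * ((i:ℝ)+1) / A * (f (x (i+1)) - f xstar) := by
      field_simp
    have e2 : ((i:ℝ)+1) * ((i:ℝ)+1+1) / 2 *
        ((1 - A * (2 / (A * ((i:ℝ)+1+1)))) * ‖x (i+1) - xstar‖ ^ 2 -
          ‖x (i+1+1) - xstar‖ ^ 2 + (β * c / ρ) * (2 / (A * ((i:ℝ)+1))) ^ 2) =
        b (i+1) - b (i+1+1) + β * c / ρ * (2 * ((i:ℝ)+1+1) / (A ^ 2 * ((i:ℝ)+1))) := by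
      simp only [hbdef]
      push_cast
      field_simp
      ring
    rw [e1, e2] at hmul
    have e3 : β * c / ρ * (2 * ((i:ℝ)+1+1) / (A ^ 2 * ((i:ℝ)+1))) ≤ C := by
      have h : C - β * c / ρ * (2 * ((i:ℝ)+1+1) / (A ^ 2 * ((i:ℝ)+1))) =
          (2 * β * c * (i:ℝ)) / (ρ * A ^ 2 * ((i:ℝ)+1)) := by
        rw [hCdef]
        field_simp
        ring
      have hpos : 0 ≤ (2 * β * c * (i:ℝ)) / (ρ * A ^ 2 * ((i:ℝ)+1)) := by positivity
      linarith
    have hmD : m ≤ f (x (i+1)) - f xstar := by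
      rw [hmdef]
      exact Finset.inf'_le _ (Finset.mem_Icc.mpr ⟨by omega, by omega⟩)
    have h5 : Γ * ((i:ℝ)+1) / A * m ≤ Γ * ((i:ℝ)+1) / A * (f (x (i+1)) - f xstar) := by
      apply mul_le_mul_of_nonneg_left hmD
      positivity
    linarith
  have hsum := Finset.sum_le_sum (fun i hi => key i (Finset.mem_range.mp hi))
  have gauss : ∀ M : ℕ, (∑ i ∈ Finset.range M, ((i:ℝ)+1)) = (M:ℝ) * ((M:ℝ)+1) / 2 := by
    intro M
    induction M with
    | zero => simp
    | succ M ih =>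
      rw [Finset.sum_range_succ, ih]
      push_cast
      ring
  have hL : (∑ i ∈ Finset.range N, Γ * ((i:ℝ)+1) / A * m) =
      Γ * m / A * ((N:ℝ) * ((N:ℝ)+1) / 2) := by
    have h : ∀ i ∈ Finset.range N, Γ * ((i:ℝ)+1) / A * m = (Γ * m / A) * ((i:ℝ)+1) :=
      fun i _ => by ring
    rw [Finset.sum_congr rfl h, ← Finset.mul_sum, gauss N]
  have tel := Finset.sum_range_sub' (fun i => b (i+1)) N
  have hR : (∑ i ∈ Finset.range N, (b (i+1) - b (i+1+1) + C)) =
      (b 1 - b (N+1)) + (N:ℝ) * C := by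
    rw [Finset.sum_add_distrib, tel, Finset.sum_const, Finset.card_range,
      nsmul_eq_mul]
  have hb10 : b 1 = 0 := by norm_num [hbdef]
  have hbN : 0 ≤ b (N+1) := by
    have e : b (N+1) = (N:ℝ) * ((N:ℝ)+1) / 2 * ‖x (N+1) - xstar‖ ^ 2 := by
      simp only [hbdef]
      push_cast
      ring
    rw [e]
    positivity
  rw [hL, hR] at hsum
  have hfin : Γ * m / A * ((N:ℝ) * ((N:ℝ)+1) / 2) ≤ (N:ℝ) * C := by linarith
  have hNr : (1:ℝ) ≤ (N:ℝ) := by exact_mod_cast hN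
  have hNpos : (0:ℝ) < (N:ℝ) := by linarith
  have hfin2 : Γ * m * ((N:ℝ) * ((N:ℝ)+1)) ≤ 2 * A * ((N:ℝ) * C) := by
    have h2A : (0:ℝ) ≤ 2 * A := by positivity
    have h := mul_le_mul_of_nonneg_left hfin h2A
    have e : 2 * A * (Γ * m / A * ((N:ℝ) * ((N:ℝ)+1) / 2)) =
        Γ * m * ((N:ℝ) * ((N:ℝ)+1)) := by
      field_simp
    rw [e] at h
    linarith
  have hσne : σ ≠ 0 := ne_of_gt hσ
  have hβne : β ≠ 0 := ne_of_gt hβ0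
  have hΘne : Θ ≠ 0 := ne_of_gt hΘ
  have hΓne : Γ ≠ 0 := ne_of_gt hΓ
  have hN1 : ((N:ℝ)+1) ≠ 0 := by positivity
  have egoal : (8 * β * c) / (ρ * σ * β * Θ * Γ) * (1 / ((N:ℝ) + 1)) =
      2 * C * A / (Γ * ((N:ℝ)+1)) := by
    rw [hCdef, hAdef]
    field_simp
    ring
  rw [egoal, le_div_iff₀ (by positivity)]
  nlinarith [hfin2, hNpos, mul_pos hΓ hNpos, hm0, hC, hA]
end
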